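/- If v(p,q) > 0 and u(p,q) ≥ 0, then the surrogate PSINR satisfies ũ(p,q)/ṽ(p,q) ≤ u(p,q)/v(p,q); moreover, if v(p₀,q₀) > 0 then equality holds at the expansion point: ũ(p₀,q₀)/ṽ(p₀,q₀) = u(p₀,q₀)/v(p₀,q₀). (Properties 1 and 2 of the MM surrogate Ẽ_k = ũ/ṽ of the PSINR E_k = u/v, which guarantee convergence of Algorithm I to a stationary point.) -/

import Mathlib

noncomputable section

/-- Real inner product `aᵀp` of two real 2-vectors. -/
def dotR (a p : Fin 2 → ℝ) : ℝ := ∑ j, a j * p j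

/-- Hermitian product `f^H q` of two complex 2-vectors. -/
def dotH (f q : Fin 2 → ℂ) : ℂ := ∑ j, (starRingEnd ℂ) (f j) * q j

/-- Hermitian product `f^H p` of a complex 2-vector with a real 2-vector. -/
def dotHR (f : Fin 2 → ℂ) (p : Fin 2 → ℝ) : ℂ := ∑ j, (starRingEnd ℂ) (f j) * (p j : ℂ)

/-- `z(p,q) = g^Hq + f̃^Hp`. -/
def zFun (g ftil : Fin 2 → ℂ) (p : Fin 2 → ℝ) (q : Fin 2 → ℂ) : ℂ :=
  dotH g q + dotHR ftil p

/-- `u(p,q) = (σ₀ + aᵀp)² − |f^Hq + f̃^Hp|²`. -/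
def uFun (σ₀ : ℝ) (a : Fin 2 → ℝ) (f ftil : Fin 2 → ℂ)
    (p : Fin 2 → ℝ) (q : Fin 2 → ℂ) : ℝ :=
  (σ₀ + dotR a p) ^ 2 - (‖dotH f q + dotHR ftil p‖) ^ 2

/-- `v(p,q) = (σ₀ + bᵀp)² − |g^Hq + f̃^Hp|²`. -/
def vFun (σ₀ : ℝ) (b : Fin 2 → ℝ) (g ftil : Fin 2 → ℂ)
    (p : Fin 2 → ℝ) (q : Fin 2 → ℂ) : ℝ :=
  (σ₀ + dotR b p) ^ 2 - (‖zFun g ftil p q‖) ^ 2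

/-- Surrogate `ũ(p,q)` around the expansion point `p₀`. -/
def uTilde (σ₀ : ℝ) (a : Fin 2 → ℝ) (f ftil : Fin 2 → ℂ) (p₀ : Fin 2 → ℝ)
    (p : Fin 2 → ℝ) (q : Fin 2 → ℂ) : ℝ :=
  -(‖dotH f q + dotHR ftil p‖) ^ 2 + (σ₀ + dotR a p₀) ^ 2
    + 2 * (σ₀ + dotR a p₀) * dotR a (p - p₀)

/-- Surrogate `ṽ(p,q)` around the expansion point `(p₀, q₀)`. -/
def vTilde (σ₀ : ℝ) (b : Fin 2 → ℝ) (g ftil : Fin 2 → ℂ)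
    (p₀ : Fin 2 → ℝ) (q₀ : Fin 2 → ℂ) (p : Fin 2 → ℝ) (q : Fin 2 → ℂ) : ℝ :=
  (σ₀ + dotR b p) ^ 2 - (‖zFun g ftil p₀ q₀‖) ^ 2
    - 2 * ((starRingEnd ℂ) (zFun g ftil p₀ q₀) *
        (zFun g ftil p q - zFun g ftil p₀ q₀)).re

/-- Properties 1 and 2 of the MM surrogate `Ẽ = ũ/ṽ` of the PSINR `E = u/v`:
it is a global lower bound tight at the expansion point. -/
theorem surrogate_psinr_lower_bound_and_tight (σ₀ : ℝ) (a b : Fin 2 → ℝ)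
    (f g ftil : Fin 2 → ℂ) (p₀ : Fin 2 → ℝ) (q₀ : Fin 2 → ℂ) :
    (∀ (p : Fin 2 → ℝ) (q : Fin 2 → ℂ),
        0 < vFun σ₀ b g ftil p q → 0 ≤ uFun σ₀ a f ftil p q →
        uTilde σ₀ a f ftil p₀ p q / vTilde σ₀ b g ftil p₀ q₀ p q ≤
          uFun σ₀ a f ftil p q / vFun σ₀ b g ftil p q) ∧
    (0 < vFun σ₀ b g ftil p₀ q₀ →
        uTilde σ₀ a f ftil p₀ p₀ q₀ / vTilde σ₀ b g ftil p₀ q₀ p₀ q₀ =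
          uFun σ₀ a f ftil p₀ q₀ / vFun σ₀ b g ftil p₀ q₀) := by
  have key : ∀ z z₀ : ℂ, Complex.normSq z - Complex.normSq z₀ -
      2 * ((starRingEnd ℂ) z₀ * (z - z₀)).re = Complex.normSq (z - z₀) := by
    intro z z₀
    simp [Complex.normSq_apply, Complex.mul_re, Complex.sub_re, Complex.sub_im,
      Complex.conj_re, Complex.conj_im]
    ring
  have hdotsub : ∀ (a p p₀ : Fin 2 → ℝ), dotR a (p - p₀) = dotR a p - dotR a p₀ := by
    intro a p p₀
    simp [dotR, Fin.sum_univ_two, Pi.sub_apply]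
    ring
  have hu : ∀ (p : Fin 2 → ℝ) (q : Fin 2 → ℂ),
      uTilde σ₀ a f ftil p₀ p q ≤ uFun σ₀ a f ftil p q := by
    intro p q
    have h : 0 ≤ (dotR a p - dotR a p₀) ^ 2 := sq_nonneg _
    simp only [uTilde, uFun, hdotsub]
    nlinarith [h]
  have hv : ∀ (p : Fin 2 → ℝ) (q : Fin 2 → ℂ),
      vFun σ₀ b g ftil p q ≤ vTilde σ₀ b g ftil p₀ q₀ p q := by
    intro p q
    have h := key (zFun g ftil p q) (zFun g ftil p₀ q₀)
    have h2 : 0 ≤ Complex.normSq (zFun g ftil p q - zFun g ftil p₀ q₀) :=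
      Complex.normSq_nonneg _
    simp only [vFun, vTilde, Complex.sq_norm]
    nlinarith [h, h2]
  constructor
  · intro p q hvpos hupos
    have hvle := hv p q
    have hule := hu p q
    exact div_le_div₀ hupos hule hvpos hvle
  · intro hvpos
    have h1 : uTilde σ₀ a f ftil p₀ p₀ q₀ = uFun σ₀ a f ftil p₀ q₀ := by
      have h0 : dotR a (0 : Fin 2 → ℝ) = 0 := by simp [dotR]
      simp [uTilde, uFun, hdotsub, h0]
      ring
    have h2 : vTilde σ₀ b g ftil p₀ q₀ p₀ q₀ = vFun σ₀ b g ftil p₀ q₀ := by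
      simp [vTilde, vFun]
    rw [h1, h2]
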